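/- arXiv:math/0607531 — 2 statements merged into one kernel-verified Lean document; each statement's English description precedes it below -/
import Mathlib

section
/- Let n ≠ m with n, m ≥ 3, and let C_n and C_m denote the cycles of orders n and m. Then D(C_n, C_m) ≤ ⌈log n⌉ + 1. -/
open FirstOrder Language SimpleGraph

universe u v

/-! ### Quantifier depth of first-order formulas -/

namespace FirstOrder.Language.BoundedFormula

variable {L : Language} {α : Type*}

/-- The quantifier depth (rank) of a first-order bounded formula. -/
def qdepth : ∀ {n : ℕ}, L.BoundedFormula α n → ℕ
  | _, .falsum => 0
  | _, .equal _ _ => 0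
  | _, .rel _ _ => 0
  | _, .imp f g => max f.qdepth g.qdepth
  | _, .all f => f.qdepth + 1

end FirstOrder.Language.BoundedFormula

/-! ### Logical depth of (finite) graphs -/

/-- A simple graph, viewed as a first-order structure over the language of graphs,
satisfies a sentence. -/
def SimpleGraph.RealizeSentence {V : Type u} (G : SimpleGraph V)
    (φ : Language.graph.Sentence) : Prop :=
  letI := G.structure
  V ⊨ φ

/-- The logical depth `D(G)` of a graph: the minimum quantifier depth of a first-order
sentence (in the language of adjacency and equality) true exactly on the finite graphs
isomorphic to `G`. -/
noncomputable def Dgraph {V : Type} (G : SimpleGraph V) : ℕ :=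
  sInf { k | ∃ φ : Language.graph.Sentence, φ.qdepth ≤ k ∧
    ∀ (W : Type) (_ : Fintype W) (H : SimpleGraph W),
      H.RealizeSentence φ ↔ Nonempty (G ≃g H) }

/-- `D(G,G')`: the minimum quantifier depth of a first-order sentence true on `G`
and false on `G'`. -/
noncomputable def DgraphPair {V : Type u} {W : Type v} (G : SimpleGraph V)
    (H : SimpleGraph W) : ℕ :=
  sInf { k | ∃ φ : Language.graph.Sentence, φ.qdepth ≤ k ∧
    G.RealizeSentence φ ∧ ¬ H.RealizeSentence φ }

/-! ### The language of two binary relations, and colored versions -/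

/-- Relation symbols: two binary relations. -/
inductive TwoRel : ℕ → Type
  | r1 : TwoRel 2
  | r2 : TwoRel 2

/-- The first-order language with two binary relation symbols. -/
def L2 : Language := ⟨fun _ => Empty, TwoRel⟩

/-- A pair of binary relations on `W` as an `L2`-structure. -/
def twoRelStructure {W : Type u} (R1 R2 : W → W → Prop) : L2.Structure W where
  funMap := fun f _ => f.elim
  RelMap := fun {n} r => match n, r with
    | _, .r1 => fun x => R1 (x 0) (x 1)
    | _, .r2 => fun x => R2 (x 0) (x 1)

/-- Satisfaction of an `L2`-sentence in a pair of binary relations. -/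
def Realize2 {W : Type u} (R1 R2 : W → W → Prop) (φ : L2.Sentence) : Prop :=
  letI := twoRelStructure R1 R2
  W ⊨ φ

/-- Isomorphism of two-relation structures. -/
def Iso2 {W : Type u} {X : Type v} (R1 R2 : W → W → Prop) (S1 S2 : X → X → Prop) : Prop :=
  ∃ e : W ≃ X, (∀ a b : W, R1 a b ↔ S1 (e a) (e b)) ∧ (∀ a b : W, R2 a b ↔ S2 (e a) (e b))

/-- The logical depth of a two-relation structure among finite two-relation structures. -/
noncomputable def D2 {W : Type} (R1 R2 : W → W → Prop) : ℕ :=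
  sInf { k | ∃ φ : L2.Sentence, φ.qdepth ≤ k ∧
    ∀ (X : Type) (_ : Fintype X) (S1 S2 : X → X → Prop),
      Realize2 S1 S2 φ ↔ Iso2 R1 R2 S1 S2 }

/-- `D(S,S')` for two-relation structures. -/
noncomputable def D2pair {W : Type u} {X : Type v} (R1 R2 : W → W → Prop)
    (S1 S2 : X → X → Prop) : ℕ :=
  sInf { k | ∃ φ : L2.Sentence, φ.qdepth ≤ k ∧
    Realize2 R1 R2 φ ∧ ¬ Realize2 S1 S2 φ }

/-- `D(S,v,S',v')` for two-relation structures with designated points: the minimum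
quantifier depth of a formula with one free variable distinguishing the points. -/
noncomputable def D2pointed {W : Type u} (R1 R2 : W → W → Prop) (vtx vtx' : W) : ℕ :=
  sInf { k | ∃ φ : L2.Formula Unit, φ.qdepth ≤ k ∧
    (letI := twoRelStructure R1 R2; φ.Realize (fun _ => vtx)) ∧
    ¬ (letI := twoRelStructure R1 R2; φ.Realize (fun _ => vtx')) }

/-- Relation symbols: two binary relations plus `k` unary color predicates. -/
inductive ColRel (k : ℕ) : ℕ → Type
  | r1 : ColRel k 2
  | r2 : ColRel k 2
  | col : Fin k → ColRel k 1

/-- The first-order language with two binary relation symbols and `k` unary colors. -/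
def LCol (k : ℕ) : Language := ⟨fun _ => Empty, ColRel k⟩

/-- A colored two-relation structure. -/
def colStructure {W : Type u} (k : ℕ) (c : Fin k → W → Prop) (R1 R2 : W → W → Prop) :
    (LCol k).Structure W where
  funMap := fun f _ => f.elim
  RelMap := fun {n} r => match n, r with
    | _, .r1 => fun x => R1 (x 0) (x 1)
    | _, .r2 => fun x => R2 (x 0) (x 1)
    | _, .col i => fun x => c i (x 0)

/-- Satisfaction of an `LCol k`-sentence in a colored two-relation structure. -/
def RealizeCol {W : Type u} (k : ℕ) (c : Fin k → W → Prop) (R1 R2 : W → W → Prop)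
    (φ : (LCol k).Sentence) : Prop :=
  letI := colStructure k c R1 R2
  W ⊨ φ

/-- Isomorphism of colored two-relation structures. -/
def IsoCol {W : Type u} {X : Type v} (k : ℕ) (c : Fin k → W → Prop)
    (R1 R2 : W → W → Prop) (c' : Fin k → X → Prop) (S1 S2 : X → X → Prop) : Prop :=
  ∃ e : W ≃ X, (∀ i w, c i w ↔ c' i (e w)) ∧
    (∀ a b : W, R1 a b ↔ S1 (e a) (e b)) ∧ (∀ a b : W, R2 a b ↔ S2 (e a) (e b))

/-- The logical depth of a colored two-relation structure among finite such structures. -/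
noncomputable def DCol {W : Type} (k : ℕ) (c : Fin k → W → Prop)
    (R1 R2 : W → W → Prop) : ℕ :=
  sInf { d | ∃ φ : (LCol k).Sentence, φ.qdepth ≤ d ∧
    ∀ (X : Type) (_ : Fintype X) (c' : Fin k → X → Prop) (S1 S2 : X → X → Prop),
      RealizeCol k c' S1 S2 φ ↔ IsoCol k c R1 R2 c' S1 S2 }

/-! ### Cycles, pseudo-facial cycles -/

/-- A subgraph is a cycle if it is finite, connected, and `2`-regular. -/
def IsCycleSubgraph {V : Type u} {G : SimpleGraph V} (C : G.Subgraph) : Prop :=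
  C.verts.Finite ∧ C.Connected ∧ ∀ v ∈ C.verts, (C.neighborSet v).ncard = 2

/-- `g(u,v)`: the minimum length of a cycle passing through `u` and `v`. -/
noncomputable def girthVia {V : Type u} (G : SimpleGraph V) (u v : V) : ℕ :=
  sInf { k | ∃ C : G.Subgraph, IsCycleSubgraph C ∧ u ∈ C.verts ∧ v ∈ C.verts ∧
    C.verts.ncard = k }

/-- `C` is the shortest cycle via `u` and `v`: a unique cycle of length at most `g(u,v)`
passing through `u` and `v`. -/
def IsShortestCycleVia {V : Type u} {G : SimpleGraph V} (C : G.Subgraph) (u v : V) : Prop :=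
  IsCycleSubgraph C ∧ u ∈ C.verts ∧ v ∈ C.verts ∧ C.verts.ncard ≤ girthVia G u v ∧
  ∀ D : G.Subgraph, IsCycleSubgraph D → u ∈ D.verts → v ∈ D.verts →
    D.verts.ncard ≤ girthVia G u v → D = C

/-- A cycle is pseudo-facial if for every two of its vertices non-adjacent along it,
it is the shortest cycle via these vertices. -/
def IsPseudoFacial {V : Type u} {G : SimpleGraph V} (C : G.Subgraph) : Prop :=
  IsCycleSubgraph C ∧
  ∀ u v : V, u ∈ C.verts → v ∈ C.verts → u ≠ v → ¬ C.Adj u v → IsShortestCycleVia C u v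

/-- `f(G)`: the maximum length of a pseudo-facial cycle of `G`. -/
noncomputable def maxFacialLen {V : Type u} (G : SimpleGraph V) : ℕ :=
  sSup { k | ∃ C : G.Subgraph, IsPseudoFacial C ∧ C.verts.ncard = k }

/-- An edge is outer if it belongs to exactly one pseudo-facial cycle. -/
def IsOuterEdge {V : Type u} (G : SimpleGraph V) (e : Sym2 V) : Prop :=
  e ∈ G.edgeSet ∧ ∃! C : G.Subgraph, IsPseudoFacial C ∧ e ∈ C.edgeSet

/-! ### Pseudo-BOP graphs -/

/-- A pseudo-BOP graph: no isolated vertices; every edge is on at least one and at most two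
pseudo-facial cycles; and if two edges at a vertex `v` are outer and lie on pseudo-facial
cycles, then `v` belongs to no other pseudo-facial cycle. -/
def IsPseudoBOP {V : Type u} (G : SimpleGraph V) : Prop :=
  (∀ x : V, ∃ y : V, G.Adj x y) ∧
  (∀ e ∈ G.edgeSet, ∃ C : G.Subgraph, IsPseudoFacial C ∧ e ∈ C.edgeSet) ∧
  (∀ e ∈ G.edgeSet, ∀ C D E : G.Subgraph,
    IsPseudoFacial C → IsPseudoFacial D → IsPseudoFacial E →
    e ∈ C.edgeSet → e ∈ D.edgeSet → e ∈ E.edgeSet → C = D ∨ C = E ∨ D = E) ∧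
  (∀ x y z : V, G.Adj x y → G.Adj y z → x ≠ z →
    IsOuterEdge G s(x, y) → IsOuterEdge G s(y, z) →
    ∀ C : G.Subgraph, IsPseudoFacial C → y ∈ C.verts →
      s(x, y) ∈ C.edgeSet ∨ s(y, z) ∈ C.edgeSet)

/-! ### The dual graph and the facing structure -/

/-- The vertex set of the dual graph: pseudo-facial cycles and outer edges. -/
def DualVert {V : Type u} (G : SimpleGraph V) : Type _ :=
  {C : G.Subgraph // IsPseudoFacial C} ⊕ {e : Sym2 V // IsOuterEdge G e}

/-- Adjacency in the dual graph. -/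
def dualAdj {V : Type u} (G : SimpleGraph V) : DualVert G → DualVert G → Prop
  | .inl C, .inl D => C ≠ D ∧ ∃ e : Sym2 V, e ∈ C.val.edgeSet ∧ e ∈ D.val.edgeSet
  | .inl C, .inr f => f.val ∈ C.val.edgeSet
  | .inr f, .inl C => f.val ∈ C.val.edgeSet
  | .inr _, .inr _ => False

/-- The dual graph (the dual tree when `G` is biconnected outerplanar): vertices are the
pseudo-facial cycles and outer edges; two cycles are adjacent iff they share an edge; a
cycle is adjacent to an outer edge iff it contains it. -/
def dualGraph {V : Type u} (G : SimpleGraph V) : SimpleGraph (DualVert G) where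
  Adj := dualAdj G
  symm := by
    constructor
    rintro (C | f) (D | g) h
    · exact ⟨Ne.symm h.1, h.2.imp fun e he => ⟨he.2, he.1⟩⟩
    · exact h
    · exact h
    · exact h.elim
  loopless := by
    constructor
    rintro (C | f) h
    · exact h.1 rfl
    · exact h.elim

/-- The crossing relation: the dual edge `{x,y}` crosses the `G`-edge `e`. -/
def crossesAt {V : Type u} {G : SimpleGraph V} : DualVert G → DualVert G → Sym2 V → Prop
  | .inl C, .inl D, e => C ≠ D ∧ e ∈ C.val.edgeSet ∧ e ∈ D.val.edgeSet
  | .inl C, .inr f, e => e = f.val ∧ f.val ∈ C.val.edgeSet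
  | .inr f, .inl C, e => e = f.val ∧ f.val ∈ C.val.edgeSet
  | .inr _, .inr _, _ => False

/-- A vertex of the dual graph is a leaf if it has exactly one neighbor. -/
def dualIsLeaf {V : Type u} (G : SimpleGraph V) (x : DualVert G) : Prop :=
  ((dualGraph G).neighborSet x).ncard = 1

/-- The first clause of the layout of the facing structure: `x` and `y` are common neighbors
of some dual vertex `v` and the crossed `G`-edges `{v,x}*`, `{v,y}*` are adjacent in `G`. -/
def facingL1 {V : Type u} (G : SimpleGraph V) (x y : DualVert G) : Prop :=
  x ≠ y ∧ ∃ z : DualVert G, (dualGraph G).Adj z x ∧ (dualGraph G).Adj z y ∧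
    ∃ e f : Sym2 V, crossesAt z x e ∧ crossesAt z y f ∧ e ≠ f ∧ ∃ w : V, w ∈ e ∧ w ∈ f

/-- The layout relation `L` of the facing structure `F(G) = ⟨H,L⟩`. -/
def facingLayout {V : Type u} (G : SimpleGraph V) (x y : DualVert G) : Prop :=
  facingL1 G x y ∨
  ∃ a b : DualVert G, (dualGraph G).Adj a b ∧ ¬ dualIsLeaf G a ∧ ¬ dualIsLeaf G b ∧
    (dualGraph G).Adj a x ∧ facingL1 G b x ∧ (dualGraph G).Adj b y ∧ facingL1 G a y ∧
    ∃ e f : Sym2 V, crossesAt a x e ∧ crossesAt b y f ∧ e ≠ f ∧ ∃ w : V, w ∈ e ∧ w ∈ f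

/-- Isomorphism of the facing structures of two graphs, as two-relation structures. -/
def FacingIso {V : Type u} {W : Type v} (G : SimpleGraph V) (G' : SimpleGraph W) : Prop :=
  ∃ e : DualVert G ≃ DualVert G',
    (∀ a b : DualVert G, (dualGraph G).Adj a b ↔ (dualGraph G').Adj (e a) (e b)) ∧
    (∀ a b : DualVert G, facingLayout G a b ↔ facingLayout G' (e a) (e b))

/-! ### Biconnected outerplanar graphs (dissections of a convex polygon) -/

/-- `x` lies strictly inside the arc from `a` to `b` (in the `+1` direction) of the
cycle on `ZMod n`. -/
def StrictInsideArc {n : ℕ} (a b x : ZMod n) : Prop :=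
  0 < (x - a).val ∧ (x - a).val < (b - a).val

/-- Chords `{a,b}` and `{c,d}` cross: the two arcs determined by `a`, `b` each contain
exactly one of `c`, `d` strictly inside. -/
def ChordsCross {n : ℕ} (a b c d : ZMod n) : Prop :=
  (StrictInsideArc a b c ∧ StrictInsideArc b a d) ∨
  (StrictInsideArc a b d ∧ StrictInsideArc b a c)

/-- `{a,b}` is a chord of the polygon: not an edge of the Hamiltonian cycle. -/
def IsChordPair {n : ℕ} (a b : ZMod n) : Prop := a ≠ b ∧ b ≠ a + 1 ∧ a ≠ b + 1

/-- A biconnected outerplanar graph, i.e. a dissection of the convex `n`-gon: the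
Hamiltonian cycle edges together with pairwise non-crossing chords. -/
def IsBOP {n : ℕ} (G : SimpleGraph (ZMod n)) : Prop :=
  3 ≤ n ∧ (∀ i : ZMod n, G.Adj i (i + 1)) ∧
  ∀ a b c d : ZMod n, G.Adj a b → G.Adj c d → IsChordPair a b → IsChordPair c d →
    ¬ ChordsCross a b c d

/-! ### Degrees, fineness, yuppies -/

/-- The maximum vertex degree of a graph. -/
noncomputable def maxDeg {W : Type u} (H : SimpleGraph W) : ℕ :=
  ⨆ w : W, (H.neighborSet w).ncard

/-- `H` is `r`-fine: every two vertex-disjoint paths on `r` vertices have different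
degree sequences. -/
def IsFine {W : Type u} (H : SimpleGraph W) (r : ℕ) : Prop :=
  ∀ (a b c d : W) (p : H.Walk a b) (q : H.Walk c d),
    p.IsPath → q.IsPath → p.support.length = r → q.support.length = r →
    (∀ x ∈ p.support, x ∉ q.support) →
    p.support.map (fun x => (H.neighborSet x).ncard) ≠
      q.support.map (fun x => (H.neighborSet x).ncard)

/-- `r(H)`: the minimum `r` such that `H` is `r`-fine. -/
noncomputable def fineness {W : Type u} (H : SimpleGraph W) : ℕ :=
  sInf { r | IsFine H r }

/-- An `r`-yuppie: a vertex `v` such that there are `u`, `w` with `d(u,w) = 2r` and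
`d(u,v) = d(v,w) = r`. -/
def IsYuppie {W : Type u} (H : SimpleGraph W) (r : ℕ) (x : W) : Prop :=
  ∃ p q : W, H.edist p q = 2 * r ∧ H.edist p x = r ∧ H.edist x q = r

/-! ### Graphs with layout -/

/-- A graph is a cycle graph: finite, connected and `2`-regular. -/
def IsCycleGraph {X : Type u} (K : SimpleGraph X) : Prop :=
  Finite X ∧ K.Connected ∧ ∀ x : X, (K.neighborSet x).ncard = 2

/-- `L` is a layout for `H` (where `H` has no degree-2 vertices and no triangles). -/
def IsLayout {W : Type u} (H L : SimpleGraph W) : Prop :=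
  (∀ x : W, (H.neighborSet x).ncard ≠ 2) ∧ H.CliqueFree 3 ∧
  (∀ x : W, 2 ≤ (H.neighborSet x).ncard → IsCycleGraph (L.induce (H.neighborSet x))) ∧
  (∀ p q v1 v2 u1 u2 : W, H.Adj p q →
    2 ≤ (H.neighborSet p).ncard → 2 ≤ (H.neighborSet q).ncard →
    v1 ≠ v2 → H.Adj p v1 → H.Adj p v2 → L.Adj q v1 → L.Adj q v2 →
    u1 ≠ u2 → H.Adj q u1 → H.Adj q u2 → L.Adj p u1 → L.Adj p u2 →
    (v1 ≠ u1 ∧ v1 ≠ u2 ∧ v2 ≠ u1 ∧ v2 ≠ u2) ∧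
    ((L.Adj v1 u1 ∧ L.Adj v2 u2) ∨ (L.Adj v1 u2 ∧ L.Adj v2 u1))) ∧
  (∀ a b : W, L.Adj a b →
    (∃ x : W, 2 ≤ (H.neighborSet x).ncard ∧ H.Adj x a ∧ H.Adj x b) ∨
    (∃ p q : W, H.Adj p q ∧ 2 ≤ (H.neighborSet p).ncard ∧ 2 ≤ (H.neighborSet q).ncard ∧
      H.Adj p a ∧ L.Adj q a ∧ H.Adj q b ∧ L.Adj p b))

/-! ### Chains and the line graph of a graph with layout -/

/-- The crossing relation lifted to unordered dual edges. -/
def crossesSym {V : Type u} {G : SimpleGraph V} (g : Sym2 (DualVert G)) (e : Sym2 V) : Prop :=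
  ∃ x y : DualVert G, g = s(x, y) ∧ crossesAt x y e

/-- Dual edges `g1` and `g2` are joined by a chain in the facing structure of `G`:
there is a path `v0, v1, ..., vk, v(k+1)` in the dual graph whose first edge is `g1`, whose
last edge is `g2`, and in which all pairs `{v_i, v_(i+2)}` and `{v_i, v_(i+3)}` are in the
layout relation. -/
def JoinedByChain {V : Type u} (G : SimpleGraph V) (g1 g2 : Sym2 (DualVert G)) : Prop :=
  ∃ l : List (DualVert G), ∃ hl : 3 ≤ l.length,
    l.Nodup ∧ l.Chain' (dualGraph G).Adj ∧
    (∀ (i : ℕ) (h : i + 2 < l.length), facingLayout G (l[i]'(by omega)) (l[i + 2]'h)) ∧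
    (∀ (i : ℕ) (h : i + 3 < l.length), facingLayout G (l[i]'(by omega)) (l[i + 3]'h)) ∧
    g1 = s(l[0]'(by omega), l[1]'(by omega)) ∧
    g2 = s(l[l.length - 2]'(by omega), l[l.length - 1]'(by omega))

/-! ### Shortest biconnections and boundary-like cycles -/

/-- The internal vertices of a walk from `u` to `v`. -/
def interiorSupport {V : Type u} {G : SimpleGraph V} {u v : V} (P : G.Walk u v) : Set V :=
  {x | x ∈ P.support ∧ x ≠ u ∧ x ≠ v}

/-- `u` and `v` split the cycle `C` into the two paths `P1` and `P2`. -/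
def SplitsInto {V : Type u} {G : SimpleGraph V} (C : G.Subgraph) {u v : V}
    (P1 P2 : G.Walk u v) : Prop :=
  P1.IsPath ∧ P2.IsPath ∧
  (∀ x : V, x ∈ P1.support → x ∈ P2.support → x = u ∨ x = v) ∧
  (∀ e ∈ P1.edges, e ∈ C.edgeSet) ∧ (∀ e ∈ P2.edges, e ∈ C.edgeSet) ∧
  (∀ e ∈ C.edgeSet, e ∈ P1.edges ∨ e ∈ P2.edges)

/-- `C` is the shortest biconnection of `u` and `v`. -/
def IsShortestBiconnection {V : Type u} {G : SimpleGraph V} (C : G.Subgraph)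
    (u v : V) : Prop :=
  IsCycleSubgraph C ∧ u ∈ C.verts ∧ v ∈ C.verts ∧
  ∃ P1 P2 : G.Walk u v, SplitsInto C P1 P2 ∧ 2 ≤ P1.length ∧ P1.length ≤ P2.length ∧
    (if P1.length = P2.length then
      P1.length = G.dist u v ∧
      ∀ Q : G.Walk u v, Q.IsPath → Q.length = G.dist u v → Q = P1 ∨ Q = P2
    else
      (P1.length = G.dist u v ∧
        ∀ Q : G.Walk u v, Q.IsPath → Q.length = G.dist u v → Q = P1) ∧
      (∀ Q : G.Walk u v, Q.IsPath → (∀ x ∈ Q.support, x ∉ interiorSupport P1) →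
        Q.length ≤ P2.length → Q = P2))

/-- A cycle is boundary-like if for every two of its vertices non-adjacent along it,
it is the shortest biconnection of these vertices. -/
def IsBoundaryLike {V : Type u} {G : SimpleGraph V} (C : G.Subgraph) : Prop :=
  IsCycleSubgraph C ∧
  ∀ u v : V, u ∈ C.verts → v ∈ C.verts → u ≠ v → ¬ C.Adj u v → IsShortestBiconnection C u v

/-! ### Auxiliary machinery for the proof -/
namespace CycleAux

open FirstOrder.Language FirstOrder.Language.BoundedFormula

variable {L : Language} {α : Type*} {n : ℕ}

/-! ### qdepth lemmas -/

@[simp] lemma qdepth_falsum : (falsum : L.BoundedFormula α n).qdepth = 0 := rfl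
@[simp] lemma qdepth_bot : (⊥ : L.BoundedFormula α n).qdepth = 0 := rfl
@[simp] lemma qdepth_bdEqual (t₁ t₂ : L.Term (α ⊕ Fin n)) :
    (Term.bdEqual t₁ t₂).qdepth = 0 := rfl
@[simp] lemma qdepth_equal (t₁ t₂ : L.Term (α ⊕ Fin n)) :
    (BoundedFormula.equal t₁ t₂).qdepth = 0 := rfl
@[simp] lemma qdepth_rel {k : ℕ} (R : L.Relations k) (ts : Fin k → L.Term (α ⊕ Fin n)) :
    (BoundedFormula.rel R ts).qdepth = 0 := rfl
@[simp] lemma qdepth_imp (f g : L.BoundedFormula α n) :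
    (f.imp g).qdepth = max f.qdepth g.qdepth := rfl
@[simp] lemma qdepth_all (f : L.BoundedFormula α (n + 1)) :
    f.all.qdepth = f.qdepth + 1 := rfl
@[simp] lemma qdepth_not (f : L.BoundedFormula α n) : f.not.qdepth = f.qdepth := by
  show max f.qdepth 0 = f.qdepth; exact Nat.max_zero _
@[simp] lemma qdepth_ex (f : L.BoundedFormula α (n + 1)) : f.ex.qdepth = f.qdepth + 1 := by
  show max (max (max f.qdepth 0 + 1) 0) 0 = f.qdepth + 1
  simp

@[simp] lemma qdepth_not' (f : L.Formula α) : (Formula.not f).qdepth = f.qdepth :=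
  qdepth_not f

/-! ### connectives -/

def fAnd (f g : L.BoundedFormula α n) : L.BoundedFormula α n := (f.imp g.not).not

def fOr (f g : L.BoundedFormula α n) : L.BoundedFormula α n := f.not.imp g

@[simp] lemma qdepth_fAnd (f g : L.BoundedFormula α n) :
    (fAnd f g).qdepth = max f.qdepth g.qdepth := by simp [fAnd]

@[simp] lemma qdepth_fOr (f g : L.BoundedFormula α n) :
    (fOr f g).qdepth = max f.qdepth g.qdepth := by simp [fOr]

variable {M : Type*} [L.Structure M]

@[simp] lemma realize_fAnd {f g : L.BoundedFormula α n} {v : α → M} {xs : Fin n → M} :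
    (fAnd f g).Realize v xs ↔ f.Realize v xs ∧ g.Realize v xs := by
  simp [fAnd]

@[simp] lemma realize_fOr {f g : L.BoundedFormula α n} {v : α → M} {xs : Fin n → M} :
    (fOr f g).Realize v xs ↔ f.Realize v xs ∨ g.Realize v xs := by
  simp [fOr]; tauto

end CycleAux

namespace CycleAux

/-! ### the distance-at-most-d formula -/

/-- Formula asserting a walk of length at most `d` between variables `i` and `j`. -/
def dle : ℕ → {k : ℕ} → Fin k → Fin k → Language.graph.BoundedFormula Empty k
  | 0, _, i, j => Term.bdEqual (Term.var (Sum.inr i)) (Term.var (Sum.inr j))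
  | 1, _, i, j => fOr (Term.bdEqual (Term.var (Sum.inr i)) (Term.var (Sum.inr j)))
      (Language.adj.boundedFormula₂ (Term.var (Sum.inr i)) (Term.var (Sum.inr j)))
  | (d+2), _, i, j =>
      (fAnd (dle ((d+3)/2) i.castSucc (Fin.last _)) (dle ((d+2) - (d+3)/2) (Fin.last _) j.castSucc)).ex
  termination_by d => d
  decreasing_by all_goals omega

lemma qdepth_dle (d : ℕ) : ∀ {k} (i j : Fin k), (dle d i j).qdepth ≤ Nat.clog 2 d := by
  induction d using Nat.strong_induction_on with
  | _ d ih =>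
    rcases d with _ | _ | e
    · intro k i j; rw [dle]; simp
    · intro k i j; rw [dle]; simp [Relations.boundedFormula₂, Relations.boundedFormula]
    · intro k i j
      rw [dle]
      have h1 := ih ((e+3)/2) (by omega) (k := k+1) i.castSucc (Fin.last _)
      have h2 := ih ((e+2) - (e+3)/2) (by omega) (k := k+1) (Fin.last _) j.castSucc
      have hc : Nat.clog 2 (e+1+1) = Nat.clog 2 ((e+3)/2) + 1 := by
        have h4 : (e+1+1+2-1)/2 = (e+3)/2 := by omega
        rw [Nat.clog_of_two_le (by norm_num) (by omega), h4]
      have hm : Nat.clog 2 ((e+2) - (e+3)/2) ≤ Nat.clog 2 ((e+3)/2) :=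
        Nat.clog_mono_right _ (by omega)
      simp only [qdepth_ex, qdepth_fAnd]
      omega

variable {V : Type} {G : SimpleGraph V}

lemma walk_split : ∀ (a : ℕ) (b : ℕ) (x y : V) (w : G.Walk x y), w.length ≤ a + b →
    ∃ (z : V) (w1 : G.Walk x z) (w2 : G.Walk z y), w1.length ≤ a ∧ w2.length ≤ b := by
  intro a
  induction a with
  | zero =>
    intro b x y w hw
    exact ⟨x, .nil, w, by simp, by simpa using hw⟩
  | succ a ih =>
    intro b x y w hw
    cases w with
    | nil => exact ⟨x, .nil, .nil, by simp, by simp⟩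
    | @cons _ u _ h w' =>
      rw [SimpleGraph.Walk.length_cons] at hw
      obtain ⟨z, w1, w2, h1, h2⟩ := ih b u y w' (by omega)
      exact ⟨z, .cons h w1, w2, by rw [SimpleGraph.Walk.length_cons]; omega, h2⟩

lemma walk_le_one : ∀ {x y : V} (w : G.Walk x y), w.length ≤ 1 → x = y ∨ G.Adj x y := by
  intro x y w hw
  cases w with
  | nil => exact Or.inl rfl
  | cons h w' =>
    rw [SimpleGraph.Walk.length_cons] at hw
    have := SimpleGraph.Walk.eq_of_length_eq_zero (p := w') (by omega)
    subst this
    exact Or.inr h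

lemma realize_dle (d : ℕ) : ∀ {k} (i j : Fin k) (env : Empty → V) (v : Fin k → V),
    (letI := G.structure; (dle d i j).Realize env v) ↔
      ∃ w : G.Walk (v i) (v j), w.length ≤ d := by
  letI := G.structure
  induction d using Nat.strong_induction_on with
  | _ d ih =>
    rcases d with _ | _ | e
    · intro k i j env v
      rw [dle]
      simp only [BoundedFormula.realize_bdEqual, Term.realize_var, Sum.elim_inr]
      constructor
      · intro h; exact ⟨SimpleGraph.Walk.nil.copy rfl h, by simp⟩
      · rintro ⟨w, hw⟩
        exact SimpleGraph.Walk.eq_of_length_eq_zero (Nat.le_zero.mp hw)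
    · intro k i j env v
      rw [dle]
      simp only [realize_fOr, BoundedFormula.realize_bdEqual, Term.realize_var, Sum.elim_inr,
        BoundedFormula.realize_rel₂]
      have hadj : (Structure.RelMap Language.adj ![v i, v j] : Prop) ↔ G.Adj (v i) (v j) :=
        Iff.rfl
      rw [hadj]
      constructor
      · rintro (h | h)
        · exact ⟨SimpleGraph.Walk.nil.copy rfl h, by simp⟩
        · exact ⟨SimpleGraph.Walk.cons h SimpleGraph.Walk.nil, by simp⟩
      · rintro ⟨w, hw⟩
        exact walk_le_one w hw
    · intro k i j env v
      rw [dle]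
      rw [BoundedFormula.realize_ex]
      constructor
      · rintro ⟨z, hz⟩
        rw [realize_fAnd] at hz
        obtain ⟨h1, h2⟩ := hz
        rw [ih _ (by omega)] at h1
        rw [ih _ (by omega)] at h2
        rw [Fin.snoc_castSucc] at h1 h2
        rw [Fin.snoc_last] at h1 h2
        obtain ⟨w1, hw1⟩ := h1
        obtain ⟨w2, hw2⟩ := h2
        exact ⟨w1.append w2, by rw [SimpleGraph.Walk.length_append]; omega⟩
      · rintro ⟨w, hw⟩
        obtain ⟨z, w1, w2, h1, h2⟩ := walk_split ((e+3)/2) ((e+2) - (e+3)/2) _ _ w (by omega)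
        refine ⟨z, ?_⟩
        rw [realize_fAnd]
        constructor
        · rw [ih _ (by omega), Fin.snoc_castSucc, Fin.snoc_last]; exact ⟨w1, h1⟩
        · rw [ih _ (by omega), Fin.snoc_castSucc, Fin.snoc_last]; exact ⟨w2, h2⟩

end CycleAux

namespace CycleAux

/-! ### cyclic distance on `Fin N` -/

/-- cyclic distance from 0. -/
def cd {N : ℕ} (u : Fin N) : ℕ := min u.val (N - u.val)

variable {N : ℕ} [NeZero N]

omit [NeZero N] in
lemma cd_le_half (u : Fin N) : cd u ≤ N / 2 := by
  have := u.isLt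
  unfold cd
  omega

lemma val_zero' : (0 : Fin N).val = 0 := rfl

lemma cd_zero_iff {u : Fin N} : cd u = 0 ↔ u = 0 := by
  have := u.isLt
  have hN := Nat.pos_of_ne_zero (NeZero.ne N)
  rw [Fin.ext_iff, val_zero']
  unfold cd
  omega

lemma val_one (hN : 2 ≤ N) : (1 : Fin N).val = 1 := by
  rw [Fin.val_one']
  exact Nat.mod_eq_of_lt (by omega)

lemma val_add_one (hN : 2 ≤ N) (u : Fin N) : (u + 1).val = (u.val + 1) % N := by
  rw [Fin.add_def, val_one hN]

lemma val_sub_one (hN : 2 ≤ N) (u : Fin N) :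
    (u - 1).val = if u.val = 0 then N - 1 else u.val - 1 := by
  have hu := u.isLt
  have hval : (u - 1).val = ((N - (1 : Fin N).val) + u.val) % N := rfl
  rw [val_one hN] at hval
  rw [hval]
  split
  · next h => rw [h]; exact Nat.mod_eq_of_lt (by omega)
  · next h =>
    have h2 : N - 1 + u.val = (u.val - 1) + N := by omega
    rw [h2, Nat.add_mod_right]
    exact Nat.mod_eq_of_lt (by omega)

lemma cd_add_one (hN : 2 ≤ N) (u : Fin N) : cd (u + 1) ≤ cd u + 1 := by
  have hu := u.isLt
  have h := val_add_one hN u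
  unfold cd
  rcases Nat.lt_or_ge (u.val + 1) N with h' | h'
  · rw [h, Nat.mod_eq_of_lt h']; omega
  · have h3 : u.val = N - 1 := by omega
    have h2 : (u.val + 1) % N = 0 := by
      rw [h3, show N - 1 + 1 = N by omega, Nat.mod_self]
    rw [h, h2]; omega

lemma cd_sub_one (hN : 2 ≤ N) (u : Fin N) : cd (u - 1) ≤ cd u + 1 := by
  have hu := u.isLt
  have h := val_sub_one hN u
  unfold cd
  rcases eq_or_ne u.val 0 with h' | h' <;> simp [h'] at h <;> rw [h] <;> omega

lemma eq_one_of_val_eq_one (hN : 2 ≤ N) {u : Fin N} (h : u.val = 1) : u = 1 := by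
  rwa [Fin.ext_iff, val_one hN]

lemma val_neg (u : Fin N) (hu : u ≠ 0) : (-u).val = N - u.val := by
  have hvv := u.isLt
  have h0 : u.val ≠ 0 := fun h => hu (Fin.ext (by rw [h, val_zero']))
  rw [Fin.neg_def]
  exact Nat.mod_eq_of_lt (by omega)

variable (hN : 3 ≤ N)

omit [NeZero N] in
lemma cycle_adj {x y : Fin N} :
    (SimpleGraph.cycleGraph N).Adj x y ↔ (x - y).val = 1 ∨ (y - x).val = 1 :=
  SimpleGraph.cycleGraph_adj'

include hN in
lemma cd_le_walk_length {x y : Fin N} (w : (SimpleGraph.cycleGraph N).Walk x y) :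
    cd (y - x) ≤ w.length := by
  induction w with
  | nil =>
    have h0 : cd (0 : Fin N) = 0 := by rw [cd_zero_iff]
    simp [sub_self, h0]
  | @cons a b c h w ih =>
    rw [SimpleGraph.Walk.length_cons]
    rw [cycle_adj] at h
    rcases h with h | h
    · have hb : a - b = 1 := eq_one_of_val_eq_one (by omega) h
      have h2 : c - a = (c - b) - 1 := by rw [← hb]; abel
      rw [h2]
      calc cd ((c - b) - 1) ≤ cd (c - b) + 1 := cd_sub_one (by omega) _
        _ ≤ w.length + 1 := by omega
    · have hb : b - a = 1 := eq_one_of_val_eq_one (by omega) h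
      have h2 : c - a = (c - b) + 1 := by rw [← hb]; abel
      rw [h2]
      calc cd ((c - b) + 1) ≤ cd (c - b) + 1 := cd_add_one (by omega) _
        _ ≤ w.length + 1 := by omega

include hN in
lemma walk_plus : ∀ (c : ℕ) (x v : Fin N), v.val = c →
    ∃ w : (SimpleGraph.cycleGraph N).Walk x (x + v), w.length = c := by
  intro c
  induction c with
  | zero =>
    intro x v hv
    have h0 : v = 0 := Fin.ext (by rw [hv, val_zero'])
    subst h0
    exact ⟨SimpleGraph.Walk.nil.copy rfl (by rw [add_zero]), by simp⟩
  | succ c ih =>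
    intro x v hv
    have hvv := v.isLt
    have h1 : (v - 1).val = c := by
      rw [val_sub_one (by omega) v, hv, if_neg (Nat.succ_ne_zero c)]
      omega
    obtain ⟨w, hw⟩ := ih x (v - 1) h1
    have hadj : (SimpleGraph.cycleGraph N).Adj (x + (v - 1)) (x + v) := by
      rw [cycle_adj]
      right
      rw [show x + v - (x + (v - 1)) = 1 by abel, val_one (by omega)]
    exact ⟨w.concat hadj, by rw [SimpleGraph.Walk.length_concat, hw]⟩

include hN in
lemma walk_minus : ∀ (c : ℕ) (x v : Fin N), v.val = c →
    ∃ w : (SimpleGraph.cycleGraph N).Walk x (x - v), w.length = c := by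
  intro c
  induction c with
  | zero =>
    intro x v hv
    have h0 : v = 0 := Fin.ext (by rw [hv, val_zero'])
    subst h0
    exact ⟨SimpleGraph.Walk.nil.copy rfl (by rw [sub_zero]), by simp⟩
  | succ c ih =>
    intro x v hv
    have hvv := v.isLt
    have h1 : (v - 1).val = c := by
      rw [val_sub_one (by omega) v, hv, if_neg (Nat.succ_ne_zero c)]
      omega
    obtain ⟨w, hw⟩ := ih x (v - 1) h1
    have hadj : (SimpleGraph.cycleGraph N).Adj (x - (v - 1)) (x - v) := by
      rw [cycle_adj]
      left
      rw [show x - (v - 1) - (x - v) = 1 by abel, val_one (by omega)]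
    exact ⟨w.concat hadj, by rw [SimpleGraph.Walk.length_concat, hw]⟩

include hN in
lemma reach_iff (x y : Fin N) (D : ℕ) :
    (∃ w : (SimpleGraph.cycleGraph N).Walk x y, w.length ≤ D) ↔ cd (y - x) ≤ D := by
  constructor
  · rintro ⟨w, hw⟩
    exact le_trans (cd_le_walk_length hN w) hw
  · intro h
    set u := y - x with hu
    have hvv := u.isLt
    rcases le_or_gt u.val (N - u.val) with h' | h'
    · obtain ⟨w, hw⟩ := walk_plus hN u.val x u rfl
      have hxy : x + u = y := by rw [hu]; abel
      refine ⟨w.copy rfl hxy, ?_⟩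
      rw [SimpleGraph.Walk.length_copy, hw]
      unfold cd at h
      omega
    · have hu0 : u ≠ 0 := by
        intro h0
        rw [h0, val_zero'] at h'
        omega
      obtain ⟨w, hw⟩ := walk_minus hN ((-u).val) x (-u) rfl
      have hxy : x - (-u) = y := by rw [hu]; abel
      refine ⟨w.copy rfl hxy, ?_⟩
      rw [SimpleGraph.Walk.length_copy, hw, val_neg u hu0]
      unfold cd at h
      omega

end CycleAux

namespace CycleAux

open FirstOrder Language

/-! ### the two distinguishing sentences -/

/-- "There are two vertices at distance more than `D`." -/
def alphaSent (D : ℕ) : Language.graph.Sentence := ((dle D (0 : Fin 2) 1).not).ex.ex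

/-- "There are `x,y` at distance at least `t` such that every `z` is within `t/2` of `x`
or within `t-1-t/2` of `y`." (True on `C_{2t}`, false on `C_{2t+1}`.) -/
def sigmaSent (t : ℕ) : Language.graph.Sentence :=
  (fAnd ((dle (t-1) (0 : Fin 2) 1).not)
    ((fOr (dle (t/2) (0 : Fin 3) 2) (dle (t-1-t/2) (2 : Fin 3) 1)).all)).ex.ex

lemma qdepth_alpha (D : ℕ) : (alphaSent D).qdepth ≤ Nat.clog 2 D + 2 := by
  have := qdepth_dle D (0 : Fin 2) 1
  simp only [alphaSent, qdepth_ex, qdepth_not]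
  omega

lemma clog_half {n : ℕ} (hn : 2 ≤ n) : Nat.clog 2 n = Nat.clog 2 ((n+1)/2) + 1 := by
  have h4 : (n + 2 - 1)/2 = (n+1)/2 := by omega
  rw [Nat.clog_of_two_le (by norm_num) hn, h4]

lemma qdepth_sigma {t : ℕ} (ht : 2 ≤ t) : (sigmaSent t).qdepth ≤ Nat.clog 2 t + 2 := by
  have h1 := qdepth_dle (t-1) (0 : Fin 2) 1
  have h2 := qdepth_dle (t/2) (0 : Fin 3) 2
  have h3 := qdepth_dle (t-1-t/2) (2 : Fin 3) 1
  have hm1 : Nat.clog 2 (t-1) ≤ Nat.clog 2 t := Nat.clog_mono_right _ (by omega)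
  have hm2 : Nat.clog 2 (t/2) ≤ Nat.clog 2 ((t+1)/2) := Nat.clog_mono_right _ (by omega)
  have hm3 : Nat.clog 2 (t-1-t/2) ≤ Nat.clog 2 ((t+1)/2) := Nat.clog_mono_right _ (by omega)
  have hc := clog_half ht
  simp only [sigmaSent, qdepth_ex, qdepth_fAnd, qdepth_not, qdepth_all, qdepth_fOr]
  omega

/-! ### realization of the sentences -/

variable {V : Type} (G : SimpleGraph V)

lemma realize_alphaSent (D : ℕ) :
    (letI := G.structure; V ⊨ alphaSent D) ↔
      ∃ x y : V, ¬ ∃ w : G.Walk x y, w.length ≤ D := by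
  letI := G.structure
  unfold Sentence.Realize Formula.Realize alphaSent
  rw [BoundedFormula.realize_ex]
  constructor
  · rintro ⟨a, h⟩
    rw [BoundedFormula.realize_ex] at h
    obtain ⟨b, h⟩ := h
    rw [BoundedFormula.realize_not, realize_dle] at h
    exact ⟨_, _, h⟩
  · rintro ⟨x, y, h⟩
    refine ⟨x, ?_⟩
    rw [BoundedFormula.realize_ex]
    refine ⟨y, ?_⟩
    rw [BoundedFormula.realize_not, realize_dle]
    have e0 : (Fin.snoc (Fin.snoc (default : Fin 0 → V) x) y : Fin 2 → V) 0 = x := rfl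
    have e1 : (Fin.snoc (Fin.snoc (default : Fin 0 → V) x) y : Fin 2 → V) 1 = y := rfl
    rw [e0, e1]
    exact h

lemma realize_sigmaSent (t : ℕ) :
    (letI := G.structure; V ⊨ sigmaSent t) ↔
      ∃ x y : V, (¬ ∃ w : G.Walk x y, w.length ≤ t - 1) ∧
        ∀ z : V, (∃ w : G.Walk x z, w.length ≤ t/2) ∨
          ∃ w : G.Walk z y, w.length ≤ t-1-t/2 := by
  letI := G.structure
  unfold Sentence.Realize Formula.Realize sigmaSent
  rw [BoundedFormula.realize_ex]
  constructor
  · rintro ⟨a, h⟩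
    rw [BoundedFormula.realize_ex] at h
    obtain ⟨b, h⟩ := h
    rw [realize_fAnd, BoundedFormula.realize_not, realize_dle] at h
    obtain ⟨h1, h2⟩ := h
    rw [BoundedFormula.realize_all] at h2
    refine ⟨_, _, h1, fun z => ?_⟩
    have h3 := h2 z
    rw [realize_fOr, realize_dle, realize_dle] at h3
    exact h3
  · rintro ⟨x, y, h1, h2⟩
    refine ⟨x, ?_⟩
    rw [BoundedFormula.realize_ex]
    refine ⟨y, ?_⟩
    rw [realize_fAnd, BoundedFormula.realize_not, realize_dle]
    set xs : Fin 2 → V := Fin.snoc (Fin.snoc (default : Fin 0 → V) x) y with hxs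
    have e0 : xs 0 = x := rfl
    have e1 : xs 1 = y := rfl
    constructor
    · rw [e0, e1]; exact h1
    · rw [BoundedFormula.realize_all]
      intro z
      rw [realize_fOr, realize_dle, realize_dle]
      have f0 : (Fin.snoc xs z : Fin 3 → V) 0 = x := e0 ▸ rfl
      have f1 : (Fin.snoc xs z : Fin 3 → V) 1 = y := e1 ▸ rfl
      have f2 : (Fin.snoc xs z : Fin 3 → V) 2 = z := rfl
      rw [f0, f1, f2]
      exact h2 z

end CycleAux

namespace CycleAux

open FirstOrder Language

variable {N : ℕ}

lemma alpha_cycle (hN : 3 ≤ N) (D : ℕ) :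
    (letI := (SimpleGraph.cycleGraph N).structure; Fin N ⊨ alphaSent D) ↔ D + 1 ≤ N / 2 := by
  haveI : NeZero N := ⟨by omega⟩
  rw [realize_alphaSent]
  constructor
  · rintro ⟨x, y, h⟩
    rw [reach_iff hN] at h
    have := cd_le_half (y - x)
    omega
  · intro h
    refine ⟨0, ⟨N/2, by omega⟩, ?_⟩
    rw [reach_iff hN, sub_zero]
    show ¬ min (N/2) (N - N/2) ≤ D
    omega

lemma sigma_even {t : ℕ} (ht : 2 ≤ t) :
    (letI := (SimpleGraph.cycleGraph (2*t)).structure; Fin (2*t) ⊨ sigmaSent t) := by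
  have hN : 3 ≤ 2*t := by omega
  haveI : NeZero (2*t) := ⟨by omega⟩
  rw [realize_sigmaSent]
  refine ⟨0, ⟨t, by omega⟩, ?_, ?_⟩
  · rw [reach_iff hN, sub_zero]
    show ¬ min t (2*t - t) ≤ t - 1
    omega
  · intro z
    rw [reach_iff hN, reach_iff hN, sub_zero]
    have hp := z.isLt
    have hyz : ((⟨t, by omega⟩ : Fin (2*t)) - z).val = ((2*t - z.val) + t) % (2*t) := rfl
    have hmod : ((2*t - z.val) + t) % (2*t) = if z.val ≤ t then t - z.val else 3*t - z.val := by
      rcases le_or_gt z.val t with h | h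
      · rw [if_pos h, show (2*t - z.val) + t = (t - z.val) + 2*t by omega, Nat.add_mod_right]
        exact Nat.mod_eq_of_lt (by omega)
      · rw [if_neg (by omega), show (2*t - z.val) + t = 3*t - z.val by omega]
        exact Nat.mod_eq_of_lt (by omega)
    unfold cd
    rw [hyz, hmod]
    rcases le_or_gt z.val t with h | h
    · rw [if_pos h]; omega
    · rw [if_neg (by omega)]; omega

lemma sigma_odd {t : ℕ} (ht : 2 ≤ t) :
    ¬ (letI := (SimpleGraph.cycleGraph (2*t+1)).structure; Fin (2*t+1) ⊨ sigmaSent t) := by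
  have hN : 3 ≤ 2*t+1 := by omega
  haveI : NeZero (2*t+1) := ⟨by omega⟩
  rw [realize_sigmaSent]
  rintro ⟨x, y, h1, h2⟩
  rw [reach_iff hN] at h1
  set u : Fin (2*t+1) := y - x with hu
  have hcu : ¬ min u.val (2*t+1 - u.val) ≤ t - 1 := h1
  have huval := u.isLt
  have huv : u.val = t ∨ u.val = t + 1 := by omega
  set c : Fin (2*t+1) := ⟨t/2 + 1, by omega⟩ with hc
  rcases huv with huv | huv
  · -- short arc forward: use z = x - c
    have h3 := h2 (x - c)
    rw [reach_iff hN, reach_iff hN] at h3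
    have e1 : x - c - x = -c := by abel
    have e2 : y - (x - c) = u + c := by rw [hu]; abel
    rw [e1, e2] at h3
    have hnc : (-c).val = 2*t+1 - (t/2+1) := by
      rw [val_neg c (by intro h; have := congrArg Fin.val h; simp [hc, val_zero'] at this)]
    have hac : (u + c).val = t + t/2 + 1 := by
      rw [Fin.add_def]
      show (u.val + (t/2+1)) % (2*t+1) = t + t/2 + 1
      rw [huv]
      exact Nat.mod_eq_of_lt (by omega)
    rcases h3 with h3 | h3
    · have : min ((-c).val) (2*t+1 - (-c).val) ≤ t/2 := h3
      rw [hnc] at this; omega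
    · have : min ((u+c).val) (2*t+1 - (u+c).val) ≤ t-1-t/2 := h3
      rw [hac] at this; omega
  · -- long arc forward: use z = x + c
    have h3 := h2 (x + c)
    rw [reach_iff hN, reach_iff hN] at h3
    have e1 : x + c - x = c := by abel
    have e2 : y - (x + c) = u - c := by rw [hu]; abel
    rw [e1, e2] at h3
    have hsc : (u - c).val = t - t/2 := by
      have hval : (u - c).val = ((2*t+1 - (t/2+1)) + u.val) % (2*t+1) := rfl
      rw [hval, huv, show (2*t+1 - (t/2+1)) + (t+1) = (t - t/2) + (2*t+1) by omega,
        Nat.add_mod_right]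
      exact Nat.mod_eq_of_lt (by omega)
    rcases h3 with h3 | h3
    · have : min c.val (2*t+1 - c.val) ≤ t/2 := h3
      have hcv : c.val = t/2 + 1 := rfl
      rw [hcv] at this; omega
    · have : min ((u-c).val) (2*t+1 - (u-c).val) ≤ t-1-t/2 := h3
      rw [hsc] at this; omega

end CycleAux

open CycleAux in
/-- For `n ≠ m`, `D(C_n, C_m) ≤ ⌈log n⌉ + 1`. -/
theorem statement_1 (n m : ℕ) (hn : 3 ≤ n) (hm : 3 ≤ m) (hnm : n ≠ m) :
    DgraphPair (SimpleGraph.cycleGraph n) (SimpleGraph.cycleGraph m) ≤ Nat.clog 2 n + 1 := by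
  unfold DgraphPair
  apply Nat.sInf_le
  rcases lt_trichotomy (n/2) (m/2) with h | h | h
  · -- C_m has larger diameter
    refine ⟨(alphaSent (n/2)).not, ?_, ?_, ?_⟩
    · rw [qdepth_not']
      have h1 := qdepth_alpha (n/2)
      have h2 : Nat.clog 2 (n/2) ≤ Nat.clog 2 ((n+1)/2) := Nat.clog_mono_right _ (by omega)
      have h3 := clog_half (n := n) (by omega)
      omega
    · unfold SimpleGraph.RealizeSentence
      rw [Sentence.realize_not, alpha_cycle hn]
      omega
    · unfold SimpleGraph.RealizeSentence
      rw [Sentence.realize_not, not_not, alpha_cycle hm]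
      omega
  · -- equal radii : {n, m} = {2t, 2t+1}
    obtain ⟨t, ht⟩ : ∃ t, t = n / 2 := ⟨_, rfl⟩
    have ht2 : 2 ≤ t := by omega
    have hcl : Nat.clog 2 (2*t) = Nat.clog 2 t + 1 := by
      have h4 : (2*t+1)/2 = t := by omega
      rw [clog_half (n := 2*t) (by omega), h4]
    rcases Nat.lt_or_ge n m with hlt | hge
    · -- n = 2t, m = 2t+1
      have hn2 : n = 2*t := by omega
      have hm2 : m = 2*t+1 := by omega
      subst hn2; subst hm2
      refine ⟨sigmaSent t, ?_, ?_, ?_⟩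
      · have := qdepth_sigma ht2
        omega
      · exact sigma_even ht2
      · exact sigma_odd ht2
    · -- n = 2t+1, m = 2t
      have hm2 : m = 2*t := by omega
      have hn2 : n = 2*t+1 := by omega
      subst hm2; subst hn2
      refine ⟨(sigmaSent t).not, ?_, ?_, ?_⟩
      · rw [qdepth_not']
        have h1 := qdepth_sigma ht2
        have h2 : Nat.clog 2 (2*t) ≤ Nat.clog 2 (2*t+1) := Nat.clog_mono_right _ (by omega)
        omega
      · exact sigma_odd ht2
      · unfold SimpleGraph.RealizeSentence
        rw [Sentence.realize_not, not_not]
        exact sigma_even ht2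
  · -- C_n has larger diameter
    refine ⟨alphaSent (m/2), ?_, ?_, ?_⟩
    · have h1 := qdepth_alpha (m/2)
      have h2 : Nat.clog 2 (m/2) ≤ Nat.clog 2 ((n+1)/2) := Nat.clog_mono_right _ (by omega)
      have h3 := clog_half (n := n) (by omega)
      omega
    · unfold SimpleGraph.RealizeSentence
      rw [alpha_cycle hn]
      omega
    · unfold SimpleGraph.RealizeSentence
      rw [alpha_cycle hm]
      omega
end

section
/- In any graph, two distinct pseudo-facial cycles have at most two vertices in common, and if they have exactly two common vertices u and v, then {u,v} is an edge belonging to both cycles. -/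
open FirstOrder Language SimpleGraph

universe u v

section Statement9AuxA

open SimpleGraph Walk

variable {V : Type u} {G : SimpleGraph V}

lemma nbrSet_toSubgraph_start {u v : V} (P : G.Walk u v) (hP : P.IsPath) (hne : u ≠ v) :
    P.toSubgraph.neighborSet u = {P.getVert 1} := by
  cases P with
  | nil => exact absurd rfl hne
  | @cons _ b _ h q =>
    have hq : q.IsPath ∧ u ∉ q.support := (Walk.cons_isPath_iff h q).mp hP
    have hq2 : q.toSubgraph.neighborSet u = ∅ := by
      ext y
      simp only [Set.mem_empty_iff_false, iff_false, SimpleGraph.Subgraph.mem_neighborSet]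
      intro hadj
      exact hq.2 ((q.mem_verts_toSubgraph).mp (q.toSubgraph.edge_vert hadj))
    show ((G.subgraphOfAdj h) ⊔ q.toSubgraph).neighborSet u = _
    rw [SimpleGraph.Subgraph.neighborSet_sup, hq2, Set.union_empty,
      SimpleGraph.neighborSet_fst_subgraphOfAdj h, Walk.getVert_cons_succ, Walk.getVert_zero]

lemma nbrSet_toSubgraph_internal {u v : V} (P : G.Walk u v) (hP : P.IsPath) {w : V}
    (hw : w ∈ P.support) (hwu : w ≠ u) (hwv : w ≠ v) :
    ∃ a b : V, a ≠ b ∧ P.toSubgraph.neighborSet w = {a, b} := by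
  induction P with
  | nil => simp only [Walk.support_nil, List.mem_singleton] at hw; exact absurd hw hwu
  | @cons a b c h q ih =>
    have hq : q.IsPath ∧ a ∉ q.support := (Walk.cons_isPath_iff h q).mp hP
    rw [Walk.support_cons, List.mem_cons] at hw
    rcases hw with rfl | hw
    · exact absurd rfl hwu
    by_cases hwb : w = b
    · subst hwb
      have h1 : q.toSubgraph.neighborSet w = {q.getVert 1} :=
        nbrSet_toSubgraph_start q hq.1 hwv
      refine ⟨a, q.getVert 1, ?_, ?_⟩
      · intro heq
        have hmem : q.getVert 1 ∈ q.support := by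
          rw [Walk.mem_support_iff_exists_getVert]
          refine ⟨1, rfl, ?_⟩
          cases q with
          | nil => exact absurd rfl hwv
          | cons _ _ => simp [Walk.length_cons]
        rw [← heq] at hmem
        exact hq.2 hmem
      · show ((G.subgraphOfAdj h) ⊔ q.toSubgraph).neighborSet w = _
        rw [SimpleGraph.Subgraph.neighborSet_sup, h1,
          SimpleGraph.neighborSet_snd_subgraphOfAdj h, Set.singleton_union]
    · obtain ⟨x, y, hab, heq⟩ := ih hq.1 hw hwb hwv
      refine ⟨x, y, hab, ?_⟩
      show ((G.subgraphOfAdj h) ⊔ q.toSubgraph).neighborSet w = _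
      rw [SimpleGraph.Subgraph.neighborSet_sup, heq,
        SimpleGraph.neighborSet_subgraphOfAdj_of_ne_of_ne h hwu hwb, Set.empty_union]

end Statement9AuxA

section Statement9AuxB

open SimpleGraph Walk

variable {V : Type u} {G : SimpleGraph V}

lemma cycle_subgraph_of_path {u v : V} (h : G.Adj u v) (P : G.Walk u v) (hP : P.IsPath)
    (he : s(u, v) ∉ P.edges) :
    ∃ E : G.Subgraph, IsCycleSubgraph E ∧ u ∈ E.verts ∧ v ∈ E.verts ∧
      E.verts ⊆ {w | w ∈ P.support} ∧ s(u, v) ∈ E.edgeSet := by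
  have hne : u ≠ v := h.ne
  set W : G.Walk v v := Walk.cons h.symm P with hW
  have hvert : W.toSubgraph = (G.subgraphOfAdj h.symm) ⊔ P.toSubgraph := rfl
  refine ⟨W.toSubgraph, ⟨?_, W.toSubgraph_connected, ?_⟩, ?_, ?_, ?_, ?_⟩
  · rw [W.verts_toSubgraph]
    exact W.support.finite_toSet
  · -- 2-regular
    intro w hw
    rw [W.mem_verts_toSubgraph, hW, Walk.support_cons, List.mem_cons] at hw
    have hlen2 : P.getVert 1 ≠ v := by
      intro heq
      have h2 : P.toSubgraph.Adj u v := by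
        have h3 : P.getVert 1 ∈ P.toSubgraph.neighborSet u := by
          rw [nbrSet_toSubgraph_start P hP hne]; rfl
        rwa [heq] at h3
      exact he ((P.mem_edges_toSubgraph).mp h2)
    by_cases hwv : w = v
    · subst hwv
      have h1 : P.toSubgraph.neighborSet w = {P.reverse.getVert 1} := by
        rw [← P.toSubgraph_reverse]
        exact nbrSet_toSubgraph_start P.reverse hP.reverse hne.symm
      have h2 : P.reverse.getVert 1 ≠ u := by
        intro heq
        have h3 : P.toSubgraph.Adj w u := by
          have h4 : P.reverse.getVert 1 ∈ P.toSubgraph.neighborSet w := by rw [h1]; rfl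
          rwa [heq] at h4
        apply he
        rw [Sym2.eq_swap]
        exact (P.mem_edges_toSubgraph).mp h3
      rw [hvert, SimpleGraph.Subgraph.neighborSet_sup, h1,
        SimpleGraph.neighborSet_fst_subgraphOfAdj h.symm, Set.singleton_union]
      exact Set.ncard_pair (Ne.symm h2)
    · have hw' : w ∈ P.support := hw.resolve_left hwv
      by_cases hwu : w = u
      · subst hwu
        rw [hvert, SimpleGraph.Subgraph.neighborSet_sup,
          nbrSet_toSubgraph_start P hP hne,
          SimpleGraph.neighborSet_snd_subgraphOfAdj h.symm, Set.singleton_union]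
        exact Set.ncard_pair (Ne.symm hlen2)
      · obtain ⟨a, b, hab, heq⟩ := nbrSet_toSubgraph_internal P hP hw' hwu hwv
        rw [hvert, SimpleGraph.Subgraph.neighborSet_sup, heq,
          SimpleGraph.neighborSet_subgraphOfAdj_of_ne_of_ne h.symm hwv hwu,
          Set.empty_union]
        exact Set.ncard_pair hab
  · rw [W.mem_verts_toSubgraph, hW, Walk.support_cons]
    exact List.mem_cons_of_mem _ P.start_mem_support
  · exact W.start_mem_verts_toSubgraph
  · rw [W.verts_toSubgraph]
    intro w hw
    simp only [hW, Walk.support_cons, List.mem_cons, Set.mem_setOf_eq] at hw ⊢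
    rcases hw with rfl | hw
    · exact P.end_mem_support
    · exact hw
  · rw [W.mem_edges_toSubgraph, hW, Walk.edges_cons, Sym2.eq_swap]
    exact List.mem_cons_self

lemma path_in_subgraph {D : G.Subgraph} (hconn : D.Connected) {u v : V}
    (hu : u ∈ D.verts) (hv : v ∈ D.verts) :
    ∃ P : G.Walk u v, P.IsPath ∧ (∀ e ∈ P.edges, e ∈ D.edgeSet) ∧
      (∀ w ∈ P.support, w ∈ D.verts) := by
  classical
  obtain ⟨W⟩ := hconn.coe ⟨u, hu⟩ ⟨v, hv⟩
  obtain ⟨Q, hQ⟩ := W.toPath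
  refine ⟨Q.map D.hom, ?_, ?_, ?_⟩
  · exact Walk.map_isPath_of_injective SimpleGraph.Subgraph.hom_injective hQ
  · intro e hemem
    have hemem : e ∈ (Q.map D.hom).edges := hemem
    rw [Walk.edges_map, List.mem_map] at hemem
    obtain ⟨e', he', rfl⟩ := hemem
    induction e' with
    | h a b =>
      have : D.coe.Adj a b := Q.adj_of_mem_edges he'
      exact (SimpleGraph.Subgraph.mem_edgeSet).mpr ((SimpleGraph.Subgraph.coe_adj ..).mp this)
  · intro w hwmem
    have hwmem : w ∈ (Q.map D.hom).support := hwmem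
    rw [Walk.support_map, List.mem_map] at hwmem
    obtain ⟨a, _, rfl⟩ := hwmem
    exact a.property

/-- A pseudo-facial cycle is chordless. -/
lemma pseudoFacial_adj_of_adj {D : G.Subgraph} (hD : IsPseudoFacial D) {u v : V}
    (hu : u ∈ D.verts) (hv : v ∈ D.verts) (hne : u ≠ v) (hadj : G.Adj u v) : D.Adj u v := by
  by_contra hDadj
  have hshort := hD.2 u v hu hv hne hDadj
  obtain ⟨P, hP, hPe, hPs⟩ := path_in_subgraph hD.1.2.1 hu hv
  have hsuv : s(u, v) ∉ P.edges := fun hmem =>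
    hDadj ((SimpleGraph.Subgraph.mem_edgeSet).mp (hPe _ hmem))
  obtain ⟨E, hEcyc, hEu, hEv, hEverts, hEedge⟩ := cycle_subgraph_of_path hadj P hP hsuv
  have hsub : E.verts ⊆ D.verts := fun w hw => hPs w (hEverts hw)
  have hle : E.verts.ncard ≤ D.verts.ncard := Set.ncard_le_ncard hsub hD.1.1
  have hED : E = D :=
    hshort.2.2.2.2 E hEcyc hEu hEv (hle.trans hshort.2.2.2.1)
  exact hDadj ((SimpleGraph.Subgraph.mem_edgeSet).mp (hED ▸ hEedge))

lemma pseudoFacial_common_adj {C D : G.Subgraph} (hC : IsPseudoFacial C)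
    (hD : IsPseudoFacial D) (hne : C ≠ D) {u v : V}
    (huC : u ∈ C.verts) (hvC : v ∈ C.verts) (huD : u ∈ D.verts) (hvD : v ∈ D.verts)
    (huv : u ≠ v) : C.Adj u v := by
  by_contra hCadj
  by_cases hDadj : D.Adj u v
  · exact hCadj (pseudoFacial_adj_of_adj hC huC hvC huv (D.adj_sub hDadj))
  · have hsC := hC.2 u v huC hvC huv hCadj
    have hsD := hD.2 u v huD hvD huv hDadj
    exact hne (hsC.2.2.2.2 D hD.1 huD hvD hsD.2.2.2.1).symm

lemma subgraph_verts_subset_of_closed {D : G.Subgraph} (hconn : D.Connected) (S : Set V)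
    (hcl : ∀ a b : V, a ∈ S → D.Adj a b → b ∈ S) {x : V} (hx : x ∈ D.verts) (hxS : x ∈ S) :
    D.verts ⊆ S := by
  intro w hw
  obtain ⟨W⟩ := hconn.coe ⟨x, hx⟩ ⟨w, hw⟩
  suffices H : ∀ (a b : D.verts) (_ : D.coe.Walk a b), (a : V) ∈ S → (b : V) ∈ S by
    exact H _ _ W hxS
  intro a b W
  induction W with
  | nil => exact id
  | cons h p ih =>
    intro ha
    exact ih (hcl _ _ ha ((SimpleGraph.Subgraph.coe_adj ..).mp h))

lemma triangle_determined {D : G.Subgraph} (hD : IsCycleSubgraph D) {x y z : V}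
    (hxy : x ≠ y) (hxz : x ≠ z) (hyz : y ≠ z)
    (hx : x ∈ D.verts) (haxy : D.Adj x y) (haxz : D.Adj x z) (hayz : D.Adj y z) :
    D.verts = {x, y, z} ∧
      ∀ a b : V, D.Adj a b ↔ a ∈ ({x, y, z} : Set V) ∧ b ∈ ({x, y, z} : Set V) ∧ a ≠ b := by
  have hfin := hD.1
  have hnbr : ∀ p q r : V, p ∈ D.verts → q ≠ r → D.Adj p q → D.Adj p r →
      D.neighborSet p = {q, r} := by
    intro p q r hp hqr hpq hpr
    refine (Set.eq_of_subset_of_ncard_le ?_ ?_ ?_).symm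
    · intro t ht
      rcases ht with rfl | ht
      · exact hpq
      · exact Set.mem_singleton_iff.mp ht ▸ hpr
    · rw [hD.2.2 p hp, Set.ncard_pair hqr]
    · exact hfin.subset (D.neighborSet_subset_verts p)
  have hy : y ∈ D.verts := D.edge_vert haxy.symm
  have hz : z ∈ D.verts := D.edge_vert haxz.symm
  have hnx := hnbr x y z hx hyz haxy haxz
  have hny := hnbr y x z hy hxz haxy.symm hayz
  have hnz := hnbr z x y hz hxy haxz.symm hayz.symm
  have hcl : ∀ a b : V, a ∈ ({x, y, z} : Set V) → D.Adj a b → b ∈ ({x, y, z} : Set V) := by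
    intro a b ha hab
    rcases ha with rfl | ha
    · have : b ∈ D.neighborSet a := hab
      rw [hnx] at this
      rcases this with rfl | h2
      · exact Or.inr (Or.inl rfl)
      · exact Or.inr (Or.inr h2)
    rcases ha with rfl | ha
    · have : b ∈ D.neighborSet a := hab
      rw [hny] at this
      rcases this with rfl | h2
      · exact Or.inl rfl
      · exact Or.inr (Or.inr h2)
    · rw [Set.mem_singleton_iff] at ha
      subst ha
      have : b ∈ D.neighborSet a := hab
      rw [hnz] at this
      rcases this with rfl | h2
      · exact Or.inl rfl
      · exact Or.inr (Or.inl h2)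
  have hverts : D.verts = {x, y, z} := by
    apply Set.Subset.antisymm
    · exact subgraph_verts_subset_of_closed hD.2.1 _ hcl hx (Or.inl rfl)
    · intro t ht
      rcases ht with rfl | ht
      · exact hx
      rcases ht with rfl | ht
      · exact hy
      · exact Set.mem_singleton_iff.mp ht ▸ hz
  refine ⟨hverts, fun a b => ⟨fun hab => ?_, fun ⟨ha, hb, hne⟩ => ?_⟩⟩
  · exact ⟨hverts ▸ D.edge_vert hab, hverts ▸ D.edge_vert hab.symm, (D.adj_sub hab).ne⟩
  · rcases ha with rfl | ha
    · rcases hb with rfl | hb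
      · exact absurd rfl hne
      rcases hb with rfl | hb
      · exact haxy
      · exact Set.mem_singleton_iff.mp hb ▸ haxz
    rcases ha with rfl | ha
    · rcases hb with rfl | hb
      · exact haxy.symm
      rcases hb with rfl | hb
      · exact absurd rfl hne
      · exact Set.mem_singleton_iff.mp hb ▸ hayz
    · rw [Set.mem_singleton_iff] at ha
      subst ha
      rcases hb with rfl | hb
      · exact haxz.symm
      rcases hb with rfl | hb
      · exact hayz.symm
      · exact absurd (Set.mem_singleton_iff.mp hb).symm hne

end Statement9AuxB

/-- Two distinct pseudo-facial cycles have at most two vertices in common,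
and if they have exactly two common vertices `u`, `v`, then `{u,v}` is an edge of both. -/
theorem statement_9 {V : Type u} (G : SimpleGraph V) (C D : G.Subgraph)
    (hC : IsPseudoFacial C) (hD : IsPseudoFacial D) (hne : C ≠ D) :
    (C.verts ∩ D.verts).ncard ≤ 2 ∧
    ∀ x y : V, x ≠ y → C.verts ∩ D.verts = {x, y} →
      s(x, y) ∈ C.edgeSet ∧ s(x, y) ∈ D.edgeSet := by
  have key : ∀ u v : V, u ∈ C.verts → v ∈ C.verts → u ∈ D.verts → v ∈ D.verts → u ≠ v →
      C.Adj u v ∧ D.Adj u v := by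
    intro u v huC hvC huD hvD huv
    exact ⟨pseudoFacial_common_adj hC hD hne huC hvC huD hvD huv,
      pseudoFacial_common_adj hD hC (fun h => hne h.symm) huD hvD huC hvC huv⟩
  constructor
  · by_contra hcard
    push_neg at hcard
    obtain ⟨t, hts, ht3⟩ := Set.exists_subset_card_eq
      (show 3 ≤ (C.verts ∩ D.verts).ncard from hcard)
    obtain ⟨x, y, z, hxy, hxz, hyz, rfl⟩ := Set.ncard_eq_three.mp ht3
    have hx : x ∈ C.verts ∩ D.verts := hts (by simp)
    have hy : y ∈ C.verts ∩ D.verts := hts (by simp)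
    have hz : z ∈ C.verts ∩ D.verts := hts (by simp)
    obtain ⟨hCxy, hDxy⟩ := key x y hx.1 hy.1 hx.2 hy.2 hxy
    obtain ⟨hCxz, hDxz⟩ := key x z hx.1 hz.1 hx.2 hz.2 hxz
    obtain ⟨hCyz, hDyz⟩ := key y z hy.1 hz.1 hy.2 hz.2 hyz
    have hCt := triangle_determined hC.1 hxy hxz hyz hx.1 hCxy hCxz hCyz
    have hDt := triangle_determined hD.1 hxy hxz hyz hx.2 hDxy hDxz hDyz
    apply hne
    refine SimpleGraph.Subgraph.ext ?_ ?_
    · rw [hCt.1, hDt.1]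
    · funext a b
      exact propext ((hCt.2 a b).trans (hDt.2 a b).symm)
  · intro x y hxy hinter
    have hx : x ∈ C.verts ∩ D.verts := by rw [hinter]; simp
    have hy : y ∈ C.verts ∩ D.verts := by rw [hinter]; simp
    obtain ⟨h1, h2⟩ := key x y hx.1 hy.1 hx.2 hy.2 hxy
    exact ⟨(SimpleGraph.Subgraph.mem_edgeSet).mpr h1, (SimpleGraph.Subgraph.mem_edgeSet).mpr h2⟩
end
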